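/- Let L be the Laplacian of a connected directed graph on n nodes and L̂_u its effective-resistance-preserving symmetrization. Then there exist a projection matrix H onto 𝟙^⊥ with HL = L and a skew-symmetric matrix K with K𝟙 = 0 and 𝟙ᵀK = 0 such that L = H(I_n + 2K)L̂_u. -/

import Mathlib

open Matrix Polynomial

/-- The four Moore–Penrose conditions characterizing the pseudoinverse. -/
def IsMoorePenrose {m : Type*} [Fintype m] [DecidableEq m]
    (A B : Matrix m m ℝ) : Prop :=
  A * B * A = A ∧ B * A * B = B ∧ (A * B)ᵀ = A * B ∧ (B * A)ᵀ = B * A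

theorem isUnit_list_prod' {M : Type*} [Monoid M] (l : List M)
    (h : ∀ x ∈ l, IsUnit x) : IsUnit l.prod := by
  induction l with
  | nil => simp
  | cons a t ih =>
    rw [List.prod_cons]
    exact (h a (by simp)).mul (ih fun x hx => h x (by simp [hx]))

theorem eval_charpoly_det {m : Type*} [Fintype m] [DecidableEq m]
    {R : Type*} [CommRing R] (M : Matrix m m R) (r : R) :
    (Matrix.charpoly M).eval r = (r • (1 : Matrix m m R) - M).det := by
  rw [Matrix.charpoly, ← Polynomial.coe_evalRingHom, RingHom.map_det]
  congr 1
  ext i j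
  by_cases h : i = j <;>
    simp [h, charmatrix_apply, Matrix.one_apply, Matrix.diagonal_apply]

theorem lyapunov_zero {m : Type*} [Fintype m] [DecidableEq m] {A D : Matrix m m ℂ}
    (hAD : D * Aᵀ = -(A * D))
    (hspec : ∀ μ ∈ spectrum ℂ A, 0 < μ.re) : D = 0 := by
  have hpow : ∀ k : ℕ, D * Aᵀ ^ k = (-A) ^ k * D := by
    intro k; induction k with
    | zero => simp
    | succ k ih =>
      rw [pow_succ, ← mul_assoc, ih, mul_assoc, hAD, pow_succ, mul_assoc, neg_mul]
  have haev : ∀ p : ℂ[X], D * aeval Aᵀ p = aeval (-A) p * D := by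
    intro p
    induction p using Polynomial.induction_on' with
    | add p q hp hq => simp [mul_add, add_mul, hp, hq]
    | monomial k a =>
      simp only [aeval_monomial, Algebra.algebraMap_eq_smul_one, smul_mul_assoc, one_mul,
        mul_smul_comm, hpow k, smul_mul_assoc]
  have hCH : aeval Aᵀ (Matrix.charpoly Aᵀ) = 0 := Matrix.aeval_self_charpoly _
  have h0 : aeval (-A) (Matrix.charpoly Aᵀ) * D = 0 := by
    rw [← haev, hCH, mul_zero]
  set p := Matrix.charpoly Aᵀ with hp
  have hmon : p.Monic := Matrix.charpoly_monic _
  have hsplit : p = (p.roots.map fun r => X - C r).prod :=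
    (IsAlgClosed.splits p).eq_prod_roots_of_monic hmon
  have hunit : IsUnit (aeval (-A) p) := by
    rw [hsplit, ← Multiset.prod_toList, map_list_prod]
    refine isUnit_list_prod' _ ?_
    intro x hx
    simp only [List.mem_map, Multiset.mem_toList, Multiset.mem_map] at hx
    obtain ⟨q, ⟨r, hr, rfl⟩, rfl⟩ := hx
    have hrs : r ∈ spectrum ℂ A := by
      rw [spectrum.mem_iff]
      intro hu
      have hdet : IsUnit (algebraMap ℂ (Matrix m m ℂ) r - A).det :=
        (Matrix.isUnit_iff_isUnit_det _).mp hu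
      have heval : (algebraMap ℂ (Matrix m m ℂ) r - A).det = 0 := by
        have h1 : p.eval r = 0 := Polynomial.isRoot_of_mem_roots hr
        rw [eval_charpoly_det] at h1
        rw [Algebra.algebraMap_eq_smul_one, ← Matrix.det_transpose]
        rw [transpose_sub, transpose_smul, transpose_one]
        exact h1
      rw [heval] at hdet
      exact hdet.ne_zero rfl
    have hneg : (-r) ∉ spectrum ℂ A := by
      intro hmem
      have h1 := hspec r hrs
      have h2 := hspec (-r) hmem
      simp only [Complex.neg_re] at h2
      linarith
    rw [spectrum.notMem_iff] at hneg
    have heq : (aeval (-A)) (X - C r) = algebraMap ℂ (Matrix m m ℂ) (-r) - A := by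
      simp only [map_sub, aeval_X, aeval_C, map_neg]
      abel
    rw [heq]
    exact hneg
  obtain ⟨u, hu⟩ := hunit
  rw [← hu] at h0
  calc D = 1 * D := (one_mul D).symm
    _ = (↑u⁻¹ * ↑u) * D := by rw [Units.inv_mul]
    _ = ↑u⁻¹ * ((u : Matrix m m ℂ) * D) := by rw [mul_assoc]
    _ = 0 := by rw [h0, mul_zero]

theorem mp_unique {m : Type*} [Fintype m] [DecidableEq m]
    {A B₁ B₂ : Matrix m m ℝ} (h1 : IsMoorePenrose A B₁)
    (h2 : IsMoorePenrose A B₂) : B₁ = B₂ := by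
  obtain ⟨h1a, h1b, h1c, h1d⟩ := h1
  obtain ⟨h2a, h2b, h2c, h2d⟩ := h2
  have hAB : A * B₁ = A * B₂ := by
    calc A * B₁ = (A * B₂ * A) * B₁ := by rw [h2a]
    _ = (A * B₂) * (A * B₁) := by rw [mul_assoc]
    _ = (A * B₂)ᵀ * (A * B₁)ᵀ := by rw [h2c, h1c]
    _ = ((A * B₁) * (A * B₂))ᵀ := (transpose_mul _ _).symm
    _ = ((A * B₁ * A) * B₂)ᵀ := by simp only [mul_assoc]
    _ = (A * B₂)ᵀ := by rw [h1a]
    _ = A * B₂ := h2c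
  have hBA : B₁ * A = B₂ * A := by
    calc B₁ * A = B₁ * (A * B₂ * A) := by rw [h2a]
    _ = (B₁ * A) * (B₂ * A) := by rw [mul_assoc, mul_assoc]
    _ = (B₁ * A)ᵀ * (B₂ * A)ᵀ := by rw [h1d, h2d]
    _ = ((B₂ * A) * (B₁ * A))ᵀ := (transpose_mul _ _).symm
    _ = (B₂ * (A * B₁ * A))ᵀ := by simp only [mul_assoc]
    _ = (B₂ * A)ᵀ := by rw [h1a]
    _ = B₂ * A := h2d
  calc B₁ = B₁ * A * B₁ := h1b.symm
  _ = B₁ * (A * B₂) := by rw [mul_assoc, hAB]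
  _ = (B₂ * A) * B₂ := by rw [← mul_assoc, hBA]
  _ = B₂ := h2b

/-- Any connected directed graph Laplacian `L` decomposes as
`L = H(I + 2K)L̂ᵤ` where `H` is a projection onto `𝟙^⊥` with `HL = L` and `K` is skew
symmetric with zero row and column sums, `L̂ᵤ` being the effective-resistance preserving
symmetrization of `L`. -/
theorem laplacian_decomposition {n : ℕ} (hn : 0 < n)
    (L : Matrix (Fin n) (Fin n) ℝ) (hrow : L *ᵥ (1 : Fin n → ℝ) = 0)
    (Q : Matrix (Fin (n - 1)) (Fin n) ℝ)
    (hQ1 : Q *ᵥ (1 : Fin n → ℝ) = 0) (hQQ : Q * Qᵀ = 1)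
    (hQP : Qᵀ * Q = 1 - (n : ℝ)⁻¹ • Matrix.of (fun _ _ => (1 : ℝ)))
    (hconn : ∀ μ ∈ spectrum ℂ ((Q * L * Qᵀ).map (Complex.ofReal)), 0 < μ.re)
    (S : Matrix (Fin (n - 1)) (Fin (n - 1)) ℝ)
    (hS : (Q * L * Qᵀ) * S + S * (Q * L * Qᵀ)ᵀ = 1)
    (Lhat : Matrix (Fin n) (Fin n) ℝ)
    (hLhat : IsMoorePenrose ((2 : ℝ) • (Qᵀ * S * Q)) Lhat) :
    ∃ H K : Matrix (Fin n) (Fin n) ℝ,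
      H * H = H ∧
      H * (1 - (n : ℝ)⁻¹ • Matrix.of (fun _ _ => (1 : ℝ))) = H ∧
      H * L = L ∧
      Kᵀ = -K ∧ K *ᵥ (1 : Fin n → ℝ) = 0 ∧ (1 : Fin n → ℝ) ᵥ* K = 0 ∧
      L = H * (1 + (2 : ℝ) • K) * Lhat := by
  set Lt := Q * L * Qᵀ with hLtdef
  set Ac := Lt.map Complex.ofReal with hAcdef
  -- all-ones facts
  have hLJ : L * (Matrix.of (fun _ _ => (1 : ℝ)) : Matrix (Fin n) (Fin n) ℝ) = 0 := by
    ext i j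
    have h := congrFun hrow i
    simp only [Matrix.mulVec, dotProduct, Pi.one_apply, mul_one, Pi.zero_apply] at h
    simp [Matrix.mul_apply, h]
  have hQJ : Q * (Matrix.of (fun _ _ => (1 : ℝ)) : Matrix (Fin n) (Fin n) ℝ) = 0 := by
    ext i j
    have h := congrFun hQ1 i
    simp only [Matrix.mulVec, dotProduct, Pi.one_apply, mul_one, Pi.zero_apply] at h
    simp [Matrix.mul_apply, h]
  have hLPP : L * (Qᵀ * Q) = L := by
    rw [hQP, Matrix.mul_sub, Matrix.mul_one, Matrix.mul_smul, hLJ, smul_zero, sub_zero]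
  have hQPP : Q * ((1 - (n : ℝ)⁻¹ • Matrix.of (fun _ _ => (1 : ℝ))) : Matrix (Fin n) (Fin n) ℝ) = Q := by
    rw [Matrix.mul_sub, Matrix.mul_one, Matrix.mul_smul, hQJ, smul_zero, sub_zero]
  have hQL : Q * L = Lt * Q := by
    calc Q * L = Q * (L * (Qᵀ * Q)) := by rw [hLPP]
    _ = (Q * L * Qᵀ) * Q := by simp only [Matrix.mul_assoc]
  -- invertibility of Lt
  have h0spec : (0 : ℂ) ∉ spectrum ℂ Ac := by
    intro h
    simpa using hconn 0 h
  rw [spectrum.notMem_iff, map_zero, zero_sub] at h0spec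
  have hAcU : IsUnit Ac := by simpa using h0spec.neg
  have hdetLt : IsUnit Lt.det := by
    have h1 : IsUnit Ac.det := (Matrix.isUnit_iff_isUnit_det _).mp hAcU
    have h2 : Ac.det = Complex.ofReal Lt.det := (RingHom.map_det Complex.ofRealHom Lt).symm
    rw [h2] at h1
    exact isUnit_iff_ne_zero.mpr (by
      simpa [Complex.ofReal_eq_zero] using h1.ne_zero)
  have hinvLt : Lt⁻¹ * Lt = 1 := Matrix.nonsing_inv_mul _ hdetLt
  -- symmetry of S
  have hSsym : Sᵀ = S := by
    have h2 := congrArg Matrix.transpose hS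
    simp only [transpose_add, transpose_mul, transpose_transpose, transpose_one] at h2
    have h2b : Lt * Sᵀ + Sᵀ * Ltᵀ = 1 := by rw [add_comm] at h2; exact h2
    have hly : Lt * (S - Sᵀ) + (S - Sᵀ) * Ltᵀ = 0 := by
      calc Lt * (S - Sᵀ) + (S - Sᵀ) * Ltᵀ
          = (Lt * S + S * Ltᵀ) - (Lt * Sᵀ + Sᵀ * Ltᵀ) := by
            rw [mul_sub, sub_mul]; abel
      _ = 0 := by rw [hS, h2b, sub_self]
    have h3 : (S - Sᵀ) * Ltᵀ = -(Lt * (S - Sᵀ)) := by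
      have hly' : (S - Sᵀ) * Ltᵀ + Lt * (S - Sᵀ) = 0 := by rw [add_comm]; exact hly
      exact add_eq_zero_iff_eq_neg.mp hly'
    have hc : ((S - Sᵀ).map Complex.ofReal) * Acᵀ
        = -(Ac * ((S - Sᵀ).map Complex.ofReal)) := by
      have h4 := congrArg
        (⇑(Complex.ofRealHom.mapMatrix : Matrix (Fin (n-1)) (Fin (n-1)) ℝ →+* _)) h3
      simp only [_root_.map_mul, map_neg, RingHom.mapMatrix_apply] at h4
      rw [Matrix.transpose_map] at h4
      exact h4
    have hD0 := lyapunov_zero hc hconn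
    ext i j
    have h5 : ((S - Sᵀ).map Complex.ofReal) i j = 0 := by rw [hD0]; rfl
    simp only [Matrix.map_apply, Matrix.sub_apply, Complex.ofReal_eq_zero,
      Complex.ofReal_sub] at h5
    have := sub_eq_zero.mp h5
    simpa using this.symm
  -- invertibility of S
  have hdetS : S.det ≠ 0 := by
    intro hdet
    obtain ⟨v, hv, hSv⟩ := Matrix.exists_mulVec_eq_zero_iff.mpr hdet
    have h6 : v ⬝ᵥ ((Lt * S + S * Ltᵀ) *ᵥ v) = v ⬝ᵥ v := by
      rw [hS, Matrix.one_mulVec]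
    rw [Matrix.add_mulVec, dotProduct_add] at h6
    have t1 : (Lt * S) *ᵥ v = 0 := by
      rw [← Matrix.mulVec_mulVec, hSv, Matrix.mulVec_zero]
    have t2 : v ⬝ᵥ ((S * Ltᵀ) *ᵥ v) = 0 := by
      rw [← Matrix.mulVec_mulVec, Matrix.dotProduct_mulVec]
      have hvS : v ᵥ* S = 0 := by
        rw [← Matrix.mulVec_transpose, hSsym, hSv]
      rw [hvS, zero_dotProduct]
    rw [t1, dotProduct_zero, t2, zero_add] at h6
    exact hv (dotProduct_self_eq_zero.mp h6.symm)
  set M2 := (2 : ℝ) • S with hM2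
  have hdetM2 : IsUnit M2.det := by
    rw [hM2, Matrix.det_smul]
    exact isUnit_iff_ne_zero.mpr (mul_ne_zero (pow_ne_zero _ two_ne_zero) hdetS)
  have hM2inv : M2 * M2⁻¹ = 1 := Matrix.mul_nonsing_inv _ hdetM2
  have hinvM2 : M2⁻¹ * M2 = 1 := Matrix.nonsing_inv_mul _ hdetM2
  -- sandwich lemma
  have sand : ∀ Z W : Matrix (Fin (n - 1)) (Fin (n - 1)) ℝ,
      (Qᵀ * Z * Q) * (Qᵀ * W * Q) = Qᵀ * (Z * W) * Q := by
    intro Z W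
    calc (Qᵀ * Z * Q) * (Qᵀ * W * Q) = Qᵀ * Z * (Q * Qᵀ) * (W * Q) := by
          simp only [Matrix.mul_assoc]
    _ = Qᵀ * (Z * W) * Q := by rw [hQQ, Matrix.mul_one]; simp only [Matrix.mul_assoc]
  have hX : (2 : ℝ) • (Qᵀ * S * Q) = Qᵀ * M2 * Q := by
    rw [hM2, Matrix.mul_smul, Matrix.smul_mul]
  have hMP0 : IsMoorePenrose ((2 : ℝ) • (Qᵀ * S * Q)) (Qᵀ * M2⁻¹ * Q) := by
    rw [hX]
    refine ⟨?_, ?_, ?_, ?_⟩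
    · rw [sand, hM2inv, sand, Matrix.one_mul]
    · rw [sand, hinvM2, sand, Matrix.one_mul]
    · rw [sand, hM2inv, Matrix.mul_one, transpose_mul, transpose_transpose]
    · rw [sand, hinvM2, Matrix.mul_one, transpose_mul, transpose_transpose]
  have hLhat0 : Lhat = Qᵀ * M2⁻¹ * Q := mp_unique hLhat hMP0
  set A₀ := Lt * S - S * Ltᵀ with hA₀
  -- properties of G := Qᵀ * Lt⁻¹ * Q
  have hGL : (Qᵀ * Lt⁻¹ * Q) * L = Qᵀ * Q := by
    calc (Qᵀ * Lt⁻¹ * Q) * L = Qᵀ * Lt⁻¹ * (Q * L) := by simp only [Matrix.mul_assoc]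
    _ = Qᵀ * Lt⁻¹ * (Lt * Q) := by rw [hQL]
    _ = Qᵀ * (Lt⁻¹ * Lt) * Q := by simp only [Matrix.mul_assoc]
    _ = Qᵀ * Q := by rw [hinvLt, Matrix.mul_one]
  have hA₀t : A₀ᵀ = -A₀ := by
    simp only [hA₀, transpose_sub, transpose_mul, transpose_transpose, hSsym]
    exact (neg_sub _ _).symm
  have h2K : (2 : ℝ) • ((2 : ℝ)⁻¹ • (Qᵀ * A₀ * Q)) = Qᵀ * A₀ * Q := by
    rw [smul_smul]; norm_num
  have hIA : (1 : Matrix (Fin (n - 1)) (Fin (n - 1)) ℝ) + A₀ = Lt * M2 := by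
    rw [hA₀, hM2, Matrix.mul_smul, two_smul, ← hS]; abel
  have hKt : ((2 : ℝ)⁻¹ • (Qᵀ * A₀ * Q))ᵀ = -((2 : ℝ)⁻¹ • (Qᵀ * A₀ * Q)) := by
    simp only [transpose_smul, transpose_mul, transpose_transpose, hA₀t]
    simp [Matrix.mul_assoc, Matrix.neg_mul, Matrix.mul_neg, smul_neg]
  have hK1 : ((2 : ℝ)⁻¹ • (Qᵀ * A₀ * Q)) *ᵥ (1 : Fin n → ℝ) = 0 := by
    rw [Matrix.smul_mulVec, ← Matrix.mulVec_mulVec, hQ1, Matrix.mulVec_zero, smul_zero]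
  refine ⟨L * (Qᵀ * Lt⁻¹ * Q), (2 : ℝ)⁻¹ • (Qᵀ * A₀ * Q), ?_, ?_, ?_, hKt, hK1, ?_, ?_⟩
  · calc L * (Qᵀ * Lt⁻¹ * Q) * (L * (Qᵀ * Lt⁻¹ * Q))
        = L * ((Qᵀ * Lt⁻¹ * Q) * L) * (Qᵀ * Lt⁻¹ * Q) := by simp only [Matrix.mul_assoc]
    _ = L * (Qᵀ * Q) * (Qᵀ * Lt⁻¹ * Q) := by rw [hGL]
    _ = L * (Qᵀ * Lt⁻¹ * Q) := by rw [hLPP]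
  · have hGP : (Qᵀ * Lt⁻¹ * Q) * (1 - (n : ℝ)⁻¹ • Matrix.of (fun _ _ => (1 : ℝ)))
        = Qᵀ * Lt⁻¹ * Q := by
      rw [Matrix.mul_assoc (Qᵀ * Lt⁻¹) Q _, hQPP]
    rw [Matrix.mul_assoc L _ _, hGP]
  · calc L * (Qᵀ * Lt⁻¹ * Q) * L = L * ((Qᵀ * Lt⁻¹ * Q) * L) := by simp only [Matrix.mul_assoc]
    _ = L * (Qᵀ * Q) := by rw [hGL]
    _ = L := hLPP
  · rw [← Matrix.mulVec_transpose, hKt, Matrix.neg_mulVec, hK1, neg_zero]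
  · -- main identity
    have e2 : Lt⁻¹ * M2⁻¹ + Lt⁻¹ * A₀ * M2⁻¹ = 1 := by
      calc Lt⁻¹ * M2⁻¹ + Lt⁻¹ * A₀ * M2⁻¹ = Lt⁻¹ * (1 + A₀) * M2⁻¹ := by
            rw [mul_add, mul_one, add_mul]
      _ = Lt⁻¹ * (Lt * M2) * M2⁻¹ := by rw [hIA]
      _ = 1 := by rw [← mul_assoc, hinvLt, one_mul, hM2inv]
    have e1 : (Qᵀ * Lt⁻¹ * Q) * (1 + (2 : ℝ) • ((2 : ℝ)⁻¹ • (Qᵀ * A₀ * Q)))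
        * (Qᵀ * M2⁻¹ * Q) = Qᵀ * Q := by
      rw [h2K, mul_add, mul_one, add_mul, sand, sand, sand]
      calc Qᵀ * (Lt⁻¹ * M2⁻¹) * Q + Qᵀ * (Lt⁻¹ * A₀ * M2⁻¹) * Q
          = Qᵀ * (Lt⁻¹ * M2⁻¹ + Lt⁻¹ * A₀ * M2⁻¹) * Q := by rw [Matrix.mul_add, Matrix.add_mul]
      _ = Qᵀ * (1 : Matrix (Fin (n - 1)) (Fin (n - 1)) ℝ) * Q := by rw [e2]
      _ = Qᵀ * Q := by rw [Matrix.mul_one]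
    rw [hLhat0]
    calc L = L * (Qᵀ * Q) := hLPP.symm
    _ = L * ((Qᵀ * Lt⁻¹ * Q) * (1 + (2 : ℝ) • ((2 : ℝ)⁻¹ • (Qᵀ * A₀ * Q)))
        * (Qᵀ * M2⁻¹ * Q)) := by rw [e1]
    _ = L * (Qᵀ * Lt⁻¹ * Q) * (1 + (2 : ℝ) • ((2 : ℝ)⁻¹ • (Qᵀ * A₀ * Q)))
        * (Qᵀ * M2⁻¹ * Q) := by simp only [Matrix.mul_assoc]
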